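/- Let G be a finite connected non-complete simple graph. If μt(G) = n(G) − diam(G) + 1, then γc(G) = diam(G) − 1. -/

import Mathlib

open SimpleGraph

/-- `X` is a total mutual-visibility set of `G`: every two vertices of `G` are `X`-visible,
i.e. joined by a shortest path whose internal vertices avoid `X`. -/
def IsTMVSet {V : Type*} (G : SimpleGraph V) (X : Set V) : Prop :=
  ∀ x y : V, ∃ p : G.Walk x y, p.length = G.dist x y ∧
    ∀ w ∈ p.support, w ≠ x → w ≠ y → w ∉ X

/-- The total mutual-visibility number of `G`. -/
noncomputable def muT {V : Type*} (G : SimpleGraph V) : ℕ :=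
  sSup {n : ℕ | ∃ X : Set V, IsTMVSet G X ∧ X.ncard = n}

/-- `D` is a dominating set of `G`. -/
def IsDomSet {V : Type*} (G : SimpleGraph V) (D : Set V) : Prop :=
  ∀ v : V, v ∉ D → ∃ u ∈ D, G.Adj u v

/-- The domination number of `G`. -/
noncomputable def gammaDom {V : Type*} (G : SimpleGraph V) : ℕ :=
  sInf {n : ℕ | ∃ D : Set V, IsDomSet G D ∧ D.ncard = n}

/-- `D` is a connected dominating set of `G`. -/
def IsConnDomSet {V : Type*} (G : SimpleGraph V) (D : Set V) : Prop :=
  IsDomSet G D ∧ (G.induce D).Connected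

/-- The connected domination number of `G`. -/
noncomputable def gammaConnDom {V : Type*} (G : SimpleGraph V) : ℕ :=
  sInf {n : ℕ | ∃ D : Set V, IsConnDomSet G D ∧ D.ncard = n}

/-- The closed neighborhood of a vertex. -/
def closedNbhd {V : Type*} (G : SimpleGraph V) (v : V) : Set V :=
  insert v (G.neighborSet v)

/-- The set of simplicial vertices of `G`. -/
def simpSet {V : Type*} (G : SimpleGraph V) : Set V :=
  {v | G.IsClique (G.neighborSet v)}

/-- The set `P(G)` of vertices that appear as the unique common closed neighbor of
two vertices. -/
def pSet {V : Type*} (G : SimpleGraph V) : Set V :=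
  {v | ∃ u w : V, closedNbhd G u ∩ closedNbhd G w = {v}}

/-- The set `C(G)` of vertices belonging to every maximum total mutual-visibility set. -/
def compulsorySet {V : Type*} (G : SimpleGraph V) : Set V :=
  {v | ∀ X : Set V, IsTMVSet G X → X.ncard = muT G → v ∈ X}

/-- The set `F(G)` of vertices belonging to no maximum total mutual-visibility set. -/
def forbiddenSet {V : Type*} (G : SimpleGraph V) : Set V :=
  {v | ∀ X : Set V, IsTMVSet G X → X.ncard = muT G → v ∉ X}

/-- The independent total mutual-visibility number of `G`. -/
noncomputable def muIT {V : Type*} (G : SimpleGraph V) : ℕ :=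
  sSup {n : ℕ | ∃ X : Set V, IsTMVSet G X ∧ (∀ u ∈ X, ∀ v ∈ X, ¬ G.Adj u v) ∧ X.ncard = n}

/-- The join `G + H` of two graphs. -/
def joinGraph {V W : Type*} (G : SimpleGraph V) (H : SimpleGraph W) :
    SimpleGraph (V ⊕ W) :=
  SimpleGraph.fromRel (fun x y =>
    (∃ a b, x = Sum.inl a ∧ y = Sum.inl b ∧ G.Adj a b) ∨
    (∃ a b, x = Sum.inr a ∧ y = Sum.inr b ∧ H.Adj a b) ∨
    (∃ a b, x = Sum.inl a ∧ y = Sum.inr b))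

/-- The corona product `G ⊙ H`: a copy of `G` together with a copy `Hᵢ` of `H` for each
vertex `uᵢ` of `G`, where `uᵢ` is joined to all vertices of `Hᵢ`. -/
def coronaProd {V W : Type*} (G : SimpleGraph V) (H : SimpleGraph W) :
    SimpleGraph (V ⊕ V × W) :=
  SimpleGraph.fromRel (fun x y =>
    (∃ a b, x = Sum.inl a ∧ y = Sum.inl b ∧ G.Adj a b) ∨
    (∃ i w w', x = Sum.inr (i, w) ∧ y = Sum.inr (i, w') ∧ H.Adj w w') ∨
    (∃ i w, x = Sum.inl i ∧ y = Sum.inr (i, w)))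

/-- The lexicographic product `G ∘ H`. -/
def lexProd {V W : Type*} (G : SimpleGraph V) (H : SimpleGraph W) :
    SimpleGraph (V × W) where
  Adj x y := G.Adj x.1 y.1 ∨ (x.1 = y.1 ∧ H.Adj x.2 y.2)
  symm := ⟨fun x y h => by
    rcases h with h | ⟨h1, h2⟩
    · exact Or.inl h.symm
    · exact Or.inr ⟨h1.symm, h2.symm⟩⟩
  loopless := ⟨fun x h => by
    rcases h with h | ⟨_, h⟩
    · exact G.loopless.irrefl _ h
    · exact H.loopless.irrefl _ h⟩

/-- `B` induces a 2-connected subgraph of `G`. -/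
def IsTwoConnSet {V : Type*} (G : SimpleGraph V) (B : Set V) : Prop :=
  3 ≤ B.ncard ∧ (G.induce B).Connected ∧ ∀ v ∈ B, (G.induce (B \ {v})).Connected

private lemma my_reach_induce {V : Type*} {G : SimpleGraph V} {D : Set V} :
    ∀ {a b : V} (p : G.Walk a b), (∀ w ∈ p.support, w ∈ D) →
      ∀ (ha : a ∈ D) (hb : b ∈ D), (G.induce D).Reachable ⟨a, ha⟩ ⟨b, hb⟩ := by
  intro a b p
  induction p with
  | nil => intro _ ha hb; exact Reachable.refl _
  | @cons u v w h q ih =>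
    intro hp ha hb
    have hv : v ∈ D := hp v (by simp)
    have hadj : (G.induce D).Adj ⟨u, ha⟩ ⟨v, hv⟩ := h
    exact hadj.reachable.trans (ih (fun x hx => hp x (by simp [hx])) hv hb)

/-- If `G` is connected, non-complete and `μt(G) = n(G) - diam(G) + 1`,
then `γc(G) = diam(G) - 1`. -/
theorem gammaConnDom_eq_diam_sub_one {V : Type*} [Fintype V] (G : SimpleGraph V)
    (hG : G.Connected) (hnc : G ≠ ⊤)
    (h : muT G = Fintype.card V - G.diam + 1) :
    gammaConnDom G = G.diam - 1 := by
  classical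
  have hne : Nonempty V := hG.nonempty
  have hediam : G.ediam ≠ ⊤ := by
    obtain ⟨u, v, huv⟩ := G.exists_edist_eq_ediam_of_finite
    rw [← huv]
    exact (edist_ne_top_iff_reachable).mpr (hG u v)
  -- 2 ≤ diam
  have hab : ∃ a b : V, a ≠ b ∧ ¬ G.Adj a b := by
    by_contra hc
    push_neg at hc
    refine hnc ?_
    ext a b
    simp only [top_adj]
    exact ⟨fun h' => h'.ne, fun h' => hc a b h'⟩
  have h2d : 2 ≤ G.diam := by
    obtain ⟨a, b, hab', hnadj⟩ := hab
    have h1 : G.dist a b ≤ G.diam := dist_le_diam hediam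
    have hpos : 0 < G.dist a b := hG.pos_dist_of_ne hab'
    have hne1 : G.dist a b ≠ 1 := fun h' => hnadj (dist_eq_one_iff_adj.mp h')
    omega
  have hdn : G.diam < Fintype.card V := by
    obtain ⟨u, v, huv⟩ := G.exists_dist_eq_diam
    obtain ⟨p⟩ := hG u v
    have h1 : G.dist u v ≤ p.bypass.length := dist_le _
    have h2 : p.bypass.length < Fintype.card V := p.bypass_isPath.length_lt
    omega
  -- the μt supremum is attained
  have hSet : muT G ∈ {n : ℕ | ∃ X : Set V, IsTMVSet G X ∧ X.ncard = n} := by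
    apply Nat.sSup_mem
    · refine ⟨0, ∅, fun x y => ?_, by simp⟩
      obtain ⟨p, hp⟩ := hG.exists_walk_length_eq_dist x y
      exact ⟨p, hp, by simp⟩
    · refine ⟨Fintype.card V, ?_⟩
      rintro m ⟨X, -, rfl⟩
      have : X.ncard ≤ (Set.univ : Set V).ncard :=
        Set.ncard_le_ncard (Set.subset_univ X) Set.finite_univ
      simpa [Set.ncard_univ] using this
  obtain ⟨X, hX, hXcard⟩ := hSet
  rw [h] at hXcard
  set D : Set V := Xᶜ with hD
  have hXn : X.ncard + D.ncard = Fintype.card V := by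
    have := Set.ncard_add_ncard_compl X (Set.toFinite X) (Set.toFinite Xᶜ)
    simpa [Nat.card_eq_fintype_card] using this
  have hDcard : D.ncard = G.diam - 1 := by omega
  have hDne : D.Nonempty := Set.nonempty_of_ncard_ne_zero (by omega)
  -- D is dominating
  have hdom : IsDomSet G D := by
    intro v hv
    have hvX : v ∈ X := by simpa [hD] using hv
    by_cases huni : ∀ z : V, z ≠ v → G.Adj v z
    · obtain ⟨u, hu⟩ := hDne
      have huv : u ≠ v := by
        rintro rfl
        exact hu hvX
      exact ⟨u, hu, (huni u huv).symm⟩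
    · push_neg at huni
      obtain ⟨z, hzv, hnadj⟩ := huni
      have hdist : 2 ≤ G.dist v z := by
        have hpos : 0 < G.dist v z := hG.pos_dist_of_ne (fun e => hzv e.symm)
        have hne1 : G.dist v z ≠ 1 := fun h' => hnadj (dist_eq_one_iff_adj.mp h')
        omega
      obtain ⟨p, hlen, hint⟩ := hX v z
      set u := p.getVert 1 with hu
      have hadj : G.Adj v u := by
        have := p.adj_getVert_succ (i := 0) (by omega)
        simpa using this
      have huv : u ≠ v := hadj.ne'
      have huz : u ≠ z := fun e => hnadj (e ▸ hadj)
      have humem : u ∈ p.support :=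
        Walk.mem_support_iff_exists_getVert.mpr ⟨1, rfl, by omega⟩
      exact ⟨u, hint u humem huv huz, hadj.symm⟩
  -- D is connected
  have hconn : (G.induce D).Connected := by
    rw [connected_iff]
    refine ⟨?_, ⟨⟨hDne.choose, hDne.choose_spec⟩⟩⟩
    rintro ⟨a, ha⟩ ⟨b, hb⟩
    obtain ⟨p, _, hint⟩ := hX a b
    have hp : ∀ w ∈ p.support, w ∈ D := by
      intro w hw
      by_cases hwa : w = a
      · subst hwa; exact ha
      by_cases hwb : w = b
      · subst hwb; exact hb
      exact hint w hw hwa hwb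
    exact my_reach_induce p hp ha hb
  -- upper bound
  have hub : gammaConnDom G ≤ G.diam - 1 :=
    Nat.sInf_le ⟨D, ⟨hdom, hconn⟩, hDcard⟩
  -- lower bound
  have hlb : ∀ m ∈ {n : ℕ | ∃ D : Set V, IsConnDomSet G D ∧ D.ncard = n},
      G.diam - 1 ≤ m := by
    rintro m ⟨D', ⟨hdom', hconn'⟩, rfl⟩
    obtain ⟨u, v, huv⟩ := G.exists_dist_eq_diam
    have hu' : ∃ u' ∈ D', G.dist u u' ≤ 1 := by
      by_cases hmem : u ∈ D'
      · exact ⟨u, hmem, by rw [SimpleGraph.dist_self]; omega⟩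
      · obtain ⟨u', hu'1, hadj⟩ := hdom' u hmem
        exact ⟨u', hu'1, by
          rw [SimpleGraph.dist_comm]; exact (dist_eq_one_iff_adj.mpr hadj).le⟩
    have hv' : ∃ v' ∈ D', G.dist v' v ≤ 1 := by
      by_cases hmem : v ∈ D'
      · exact ⟨v, hmem, by rw [SimpleGraph.dist_self]; omega⟩
      · obtain ⟨v', hv'1, hadj⟩ := hdom' v hmem
        exact ⟨v', hv'1, (dist_eq_one_iff_adj.mpr hadj).le⟩
    obtain ⟨u', hu'1, hu'2⟩ := hu'
    obtain ⟨v', hv'1, hv'2⟩ := hv'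
    obtain ⟨q⟩ := hconn'.preconnected ⟨u', hu'1⟩ ⟨v', hv'1⟩
    set q' := q.bypass with hq'
    let f : G.induce D' →g G := ⟨Subtype.val, fun {x y} h' => h'⟩
    have hlen : G.dist u' v' ≤ q'.length := by
      have := dist_le (q'.map f)
      rwa [Walk.length_map] at this
    have htri : G.diam ≤ G.dist u' v' + 2 := by
      have t1 : G.dist u v ≤ G.dist u u' + G.dist u' v := hG.dist_triangle
      have t2 : G.dist u' v ≤ G.dist u' v' + G.dist v' v := hG.dist_triangle
      omega
    haveI : Fintype ↥D' := Fintype.ofFinite _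
    have hcardle : q'.length + 1 ≤ D'.ncard := by
      have h1 : q'.support.Nodup := q.bypass_isPath.support_nodup
      have h2 : q'.support.length ≤ Fintype.card ↥D' := h1.length_le_card
      have h3 : q'.support.length = q'.length + 1 := Walk.length_support _
      have h4 : D'.ncard = Fintype.card ↥D' := by
        rw [Set.ncard_eq_toFinset_card', Set.toFinset_card]
      omega
    omega
  have hlb' : G.diam - 1 ≤ gammaConnDom G :=
    le_csInf ⟨G.diam - 1, D, ⟨hdom, hconn⟩, hDcard⟩ hlb
  exact le_antisymm hub hlb'
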